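/- Two probability measures Π₁, Π₂ on [0,1] induce the same odd-budget majority voting curve, i.e., V_n(Π₁) = V_n(Π₂) for all n ≥ 0, if and only if their signed voting signatures coincide: ω_{Π₁} = ω_{Π₂}. -/

import Mathlib

open MeasureTheory
open scoped ENNReal NNReal BoundedContinuousFunction

/-- Odd-budget majority accuracy: `P n q = ℙ(Bin(2n+1,q) ≥ n+1)`. -/
noncomputable def majP (n : ℕ) (q : ℝ) : ℝ :=
  ∑ j ∈ Finset.Icc (n+1) (2*n+1), ((2*n+1).choose j : ℝ) * q^j * (1-q)^(2*n+1-j)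

/-- Population voting curve. -/
noncomputable def voteV (μ : Measure ℝ) (n : ℕ) : ℝ := ∫ q, majP n q ∂μ

lemma aux_fin (μ : Measure ℝ) [IsFiniteMeasure μ] (g : ℝ → ℝ) (hg : ∀ q ∈ Set.Icc (0:ℝ) 1, g q ≤ 1) :
    IsFiniteMeasure ((μ.restrict (Set.Icc 0 1)).withDensity (fun q => ENNReal.ofReal (g q))) := by
  apply isFiniteMeasure_withDensity
  have h : ∫⁻ q, ENNReal.ofReal (g q) ∂(μ.restrict (Set.Icc 0 1)) ≤ ∫⁻ _, 1 ∂(μ.restrict (Set.Icc 0 1)) := by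
    refine setLIntegral_mono' measurableSet_Icc fun q hq => ?_
    simpa using ENNReal.ofReal_le_one.2 (hg q hq)
  refine ne_of_lt (lt_of_le_of_lt h ?_)
  simp [lintegral_one]

/-- Signed voting signature as a signed measure on ℝ (carried on [0,1/4]). -/
noncomputable def signature (μ : Measure ℝ) [IsFiniteMeasure μ] : SignedMeasure ℝ :=
  letI h1 := aux_fin μ (fun q => 2*q-1) (by intro q hq; simp only [Set.mem_Icc] at hq; linarith [hq.2])
  letI h2 := aux_fin μ (fun q => 1-2*q) (by intro q hq; simp only [Set.mem_Icc] at hq; linarith [hq.1])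
  (((μ.restrict (Set.Icc 0 1)).withDensity (fun q => ENNReal.ofReal (2*q-1))).map
      (fun q => q*(1-q))).toSignedMeasure
  - (((μ.restrict (Set.Icc 0 1)).withDensity (fun q => ENNReal.ofReal (1-2*q))).map
      (fun q => q*(1-q))).toSignedMeasure

/-- Integral of a real function against a signed measure, via the Jordan decomposition. -/
noncomputable def sInt {α : Type*} [MeasurableSpace α] (s : SignedMeasure α) (f : α → ℝ) : ℝ :=
  (∫ a, f a ∂s.toJordanDecomposition.posPart) - ∫ a, f a ∂s.toJordanDecomposition.negPart

/-- Limiting majority accuracy. -/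
noncomputable def voteVinf (μ : Measure ℝ) : ℝ :=
  (μ (Set.Ioc (1/2 : ℝ) 1)).toReal + (1/2) * (μ {(1/2 : ℝ)}).toReal

/-- Total-variation norm of the signed voting signature. -/
noncomputable def sigTV (μ : Measure ℝ) [IsFiniteMeasure μ] : ℝ :=
  ((signature μ).totalVariation Set.univ).toReal

noncomputable def Hc (n k : ℕ) : ℝ :=
  if k ≤ n then (((2*n).choose n : ℝ)/2) * ∏ j ∈ Finset.Ico k n, ((j:ℝ)+1)/(4*j+2) else 0

noncomputable def Hn (n : ℕ) (s : ℝ) : ℝ := ∑ k ∈ Finset.range (n+1), Hc n k * s^k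

lemma Hc_top (n : ℕ) : Hc n n = ((2*n).choose n : ℝ)/2 := by
  simp [Hc]

lemma Hc_pos (n : ℕ) : 0 < Hc n n := by
  rw [Hc_top]
  have : 0 < ((2*n).choose n : ℝ) := by
    exact_mod_cast Nat.choose_pos (by omega)
  linarith

lemma Hc_rec (n k : ℕ) (h : k ≤ n) :
    (4*(k:ℝ)+2) * Hc n k = ((k:ℝ)+1) * Hc n (k+1)
      + (if k = n then ((2*(n:ℝ)+1) * ((2*n).choose n : ℝ)) else 0) := by
  rcases eq_or_lt_of_le h with rfl | hlt
  · simp [Hc, Finset.Ico_self]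
    ring
  · have h1 : k + 1 ≤ n := hlt
    have hne : ¬ (k = n) := Nat.ne_of_lt hlt
    rw [Hc, Hc, if_pos h, if_pos h1, if_neg hne]
    rw [Finset.prod_eq_prod_Ico_succ_bot hlt]
    have h42 : (4*(k:ℝ)+2) ≠ 0 := by positivity
    field_simp
    ring

noncomputable def dHn (n : ℕ) (s : ℝ) : ℝ :=
  ∑ k ∈ Finset.range (n+1), Hc n k * ((k:ℝ) * s^(k-1))

lemma Hc_succ_top (n : ℕ) : Hc n (n+1) = 0 := by simp [Hc]

lemma ode (n : ℕ) (s : ℝ) :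
    2 * Hn n s - (1 - 4*s) * dHn n s = ((2*(n:ℝ)+1) * ((2*n).choose n : ℝ)) * s^n := by
  have h4s : 4*s*dHn n s = ∑ k ∈ Finset.range (n+1), 4*(k:ℝ)*Hc n k * s^k := by
    rw [dHn, Finset.mul_sum]
    refine Finset.sum_congr rfl fun k _ => ?_
    match k with
    | 0 => simp
    | (j+1) => simp [pow_succ]; ring
  have hd : dHn n s = ∑ k ∈ Finset.range n, ((k:ℝ)+1) * Hc n (k+1) * s^k := by
    rw [dHn, Finset.sum_range_succ']
    simp only [Nat.cast_zero, zero_mul, mul_zero, add_zero, Nat.cast_add, Nat.cast_one,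
      Nat.add_sub_cancel]
    refine Finset.sum_congr rfl fun k _ => ?_
    ring
  have hA : 2 * Hn n s + 4*s*dHn n s
      = ∑ k ∈ Finset.range (n+1), (4*(k:ℝ)+2) * Hc n k * s^k := by
    rw [Hn, Finset.mul_sum, h4s, ← Finset.sum_add_distrib]
    refine Finset.sum_congr rfl fun k _ => ?_
    ring
  have hsplit : ∑ k ∈ Finset.range (n+1), (4*(k:ℝ)+2) * Hc n k * s^k
      = (∑ k ∈ Finset.range n, ((k:ℝ)+1) * Hc n (k+1) * s^k)
        + ((2*(n:ℝ)+1) * ((2*n).choose n : ℝ)) * s^n := by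
    have this1 : ∀ k ∈ Finset.range (n+1), (4*(k:ℝ)+2) * Hc n k * s^k
        = ((k:ℝ)+1) * Hc n (k+1) * s^k
          + (if k = n then ((2*(n:ℝ)+1) * ((2*n).choose n : ℝ)) * s^k else 0) := by
      intro k hk
      rw [show ((4*(k:ℝ)+2) * Hc n k * s^k = ((4*(k:ℝ)+2) * Hc n k) * s^k) from by ring,
        Hc_rec n k (by simpa [Nat.lt_succ_iff] using hk)]
      split <;> ring
    rw [Finset.sum_congr rfl this1, Finset.sum_add_distrib,
      Finset.sum_ite_eq' (Finset.range (n+1)) n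
        (fun k => ((2*(n:ℝ)+1) * ((2*n).choose n : ℝ)) * s^k),
      Finset.sum_range_succ, Hc_succ_top]
    simp
  have : 2 * Hn n s - (1 - 4*s) * dHn n s = (2 * Hn n s + 4*s*dHn n s) - dHn n s := by ring
  rw [this, hA, hsplit, hd]
  ring

lemma hasDerivAt_Hn (n : ℕ) (s : ℝ) : HasDerivAt (Hn n) (dHn n s) s := by
  unfold Hn dHn
  apply HasDerivAt.fun_sum
  intro k _
  exact (hasDerivAt_pow k s).const_mul (Hc n k)

lemma hasDerivAt_majP (n : ℕ) (q : ℝ) :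
    HasDerivAt (majP n) (((2*(n:ℝ)+1) * ((2*n).choose n : ℝ)) * (q*(1-q))^n) q := by
  classical
  set N := 2*n+1 with hN
  set t : ℕ → ℝ := fun j => ((N.choose j : ℝ)) * (j:ℝ) * q^(j-1) * (1-q)^(N-j) with ht
  have hterm : ∀ j ∈ Finset.Icc (n+1) N,
      HasDerivAt (fun q : ℝ => ((N.choose j : ℝ)) * q^j * (1-q)^(N-j)) (t j - t (j+1)) q := by
    intro j hj
    simp only [Finset.mem_Icc] at hj
    have h1 : HasDerivAt (fun q : ℝ => q^j) ((j:ℝ) * q^(j-1)) q := hasDerivAt_pow j q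
    have h2 : HasDerivAt (fun q : ℝ => (1-q)^(N-j)) ((((N-j : ℕ):ℝ)) * (1-q)^(N-j-1) * (-1)) q := by
      have hin : HasDerivAt (fun x : ℝ => 1 - x) (-1) q := (hasDerivAt_id q).const_sub 1
      exact (hasDerivAt_pow (N-j) (1-q)).comp q hin
    have := ((h1.mul h2).const_mul ((N.choose j : ℝ)))
    simp only [mul_assoc]
    refine this.congr_deriv (Eq.symm ?_)
    have hcast : ((N.choose (j+1) : ℝ)) * ((j:ℝ)+1) = (N.choose j : ℝ) * (((N - j : ℕ)) : ℝ) := by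
      exact_mod_cast congrArg (Nat.cast (R := ℝ)) (Nat.choose_succ_right_eq N j)
    have hexp : N - (j+1) = N - j - 1 := by omega
    have hj1 : j - 1 + 1 = j := by omega
    rw [ht]
    simp only [hexp]
    push_cast
    rw [← hj1, pow_succ]
    push_cast [hj1]
    linear_combination (-(q * q^(j-1)) * (1-q)^(N-j-1)) * hcast
  have hsum : HasDerivAt (majP n) (∑ j ∈ Finset.Icc (n+1) N, (t j - t (j+1))) q := by
    unfold majP
    exact HasDerivAt.fun_sum hterm
  have htel : ∑ j ∈ Finset.Icc (n+1) N, (t j - t (j+1)) = t (n+1) - t (N+1) := by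
    rw [show Finset.Icc (n+1) N = Finset.Ico (n+1) (N+1) from by rw [Finset.Ico_add_one_right_eq_Icc],
      Finset.sum_Ico_eq_sum_range]
    have hcard : N + 1 - (n+1) = n+1 := by omega
    rw [hcard]
    have := Finset.sum_range_sub' (f := fun i => t (n+1+i)) (n+1)
    simp only [Nat.add_zero] at this
    have e : ∀ k : ℕ, n+1+k+1 = n+1+(k+1) := fun k => by omega
    simp only [e]
    rw [this, show n+1+(n+1) = N+1 from by omega]
  have hend : t (N+1) = 0 := by
    have : N.choose (N+1) = 0 := Nat.choose_eq_zero_of_lt (by omega)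
    simp [ht, this]
  have hstart : t (n+1) = ((2*(n:ℝ)+1) * ((2*n).choose n : ℝ)) * (q*(1-q))^n := by
    have hch : (2*n+1) * (2*n).choose n = N.choose (n+1) * (n+1) := by
      simpa [hN] using Nat.add_one_mul_choose_eq (2*n) n
    have hch' : ((N.choose (n+1) : ℝ)) * ((n:ℝ)+1) = (2*(n:ℝ)+1) * ((2*n).choose n : ℝ) := by
      exact_mod_cast (congrArg (Nat.cast (R := ℝ)) hch).symm
    have hexp2 : N - (n+1) = n := by omega
    have hexp3 : n + 1 - 1 = n := by omega
    rw [ht]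
    simp only [hexp2, hexp3]
    push_cast
    rw [mul_pow]
    linear_combination (q^n * (1-q)^n) * hch'
  rw [htel, hend, hstart] at hsum
  simpa using hsum

lemma majP_half (n : ℕ) : majP n (1/2 : ℝ) = 1/2 := by
  unfold majP
  have hsum : ∀ j ∈ Finset.Icc (n+1) (2*n+1),
      ((2*n+1).choose j : ℝ) * (1/2:ℝ)^j * (1-1/2:ℝ)^(2*n+1-j)
        = ((2*n+1).choose j : ℝ) * (1/2:ℝ)^(2*n+1) := by
    intro j hj
    simp only [Finset.mem_Icc] at hj
    rw [show (1-1/2:ℝ) = 1/2 from by norm_num, mul_assoc, ← pow_add,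
      show j + (2*n+1-j) = 2*n+1 from by omega]
  rw [Finset.sum_congr rfl hsum, ← Finset.sum_mul]
  have hC : ∑ j ∈ Finset.Icc (n+1) (2*n+1), ((2*n+1).choose j : ℝ) = 4^n := by
    have h1 : ∑ j ∈ Finset.range (2*n+2), ((2*n+1).choose j) = 2^(2*n+1) :=
      Nat.sum_range_choose (2*n+1)
    have h2 : ∑ j ∈ Finset.range (n+1), ((2*n+1).choose j) = 4^n :=
      Nat.sum_range_choose_halfway n
    have h3 : Finset.range (2*n+2) = Finset.range (n+1) ∪ Finset.Icc (n+1) (2*n+1) := by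
      ext j
      simp [Finset.mem_range, Finset.mem_Icc, Finset.mem_union]
      omega
    have h4 : Disjoint (Finset.range (n+1)) (Finset.Icc (n+1) (2*n+1)) := by
      simp [Finset.disjoint_left, Finset.mem_range, Finset.mem_Icc]
      omega
    have h5 : ∑ j ∈ Finset.Icc (n+1) (2*n+1), ((2*n+1).choose j) = 4^n := by
      have := h1
      rw [h3, Finset.sum_union h4, h2] at this
      have h6 : (2:ℕ)^(2*n+1) = 4^n + 4^n := by
        rw [pow_succ, pow_mul]
        norm_num
        omega
      omega
    exact_mod_cast congrArg (Nat.cast (R := ℝ)) h5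
  rw [hC]
  rw [show (2*n+1) = 2*n+1 from rfl]
  have : (4:ℝ)^n * (1/2)^(2*n+1) = 1/2 := by
    rw [pow_succ, pow_mul]
    norm_num
    rw [show ((1:ℝ)/4)^n = (4^n)⁻¹ from by rw [one_div, inv_pow]]
    field_simp
  linarith [this]

lemma majP_eq (n : ℕ) (q : ℝ) : majP n q = 1/2 + (2*q-1) * Hn n (q*(1-q)) := by
  set F : ℝ → ℝ := fun q => majP n q - (1/2 + (2*q-1) * Hn n (q*(1-q))) with hF
  have hder : ∀ x : ℝ, HasDerivAt F 0 x := by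
    intro x
    have h1 := hasDerivAt_majP n x
    have hs : HasDerivAt (fun q : ℝ => q*(1-q)) (1-2*x) x := by
      have h := (hasDerivAt_id x).mul ((hasDerivAt_id x).const_sub 1)
      simp only [id_eq] at h
      exact h.congr_deriv (by ring)
    have h2 : HasDerivAt (fun q : ℝ => 1/2 + (2*q-1) * Hn n (q*(1-q)))
        (2 * Hn n (x*(1-x)) + (2*x-1) * (dHn n (x*(1-x)) * (1-2*x))) x := by
      have ha : HasDerivAt (fun q : ℝ => 2*q-1) 2 x := by
        simpa using ((hasDerivAt_id x).const_mul 2).sub_const 1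
      have hb : HasDerivAt (fun q : ℝ => Hn n (q*(1-q))) (dHn n (x*(1-x)) * (1-2*x)) x :=
        (hasDerivAt_Hn n (x*(1-x))).comp (h₂ := Hn n) x hs
      have := (ha.mul hb).const_add (1/2)
      exact this.congr_deriv (by ring)
    have heq : ((2*(n:ℝ)+1) * ((2*n).choose n : ℝ)) * (x*(1-x))^n
        = 2 * Hn n (x*(1-x)) + (2*x-1) * (dHn n (x*(1-x)) * (1-2*x)) := by
      have := ode n (x*(1-x))
      nlinarith [this]
    have := h1.fun_sub h2
    rw [hF]
    simpa [heq] using this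
  have hdiff : Differentiable ℝ F := fun x => (hder x).differentiableAt
  have hconst := is_const_of_deriv_eq_zero hdiff (fun x => (hder x).deriv) q (1/2)
  have hhalf : F (1/2) = 0 := by
    simp only [hF]
    rw [majP_half]
    norm_num
  have : F q = 0 := by rw [hconst, hhalf]
  simp only [hF] at this
  linarith

noncomputable def nu (μ : Measure ℝ) (g : ℝ → ℝ) : Measure ℝ :=
  ((μ.restrict (Set.Icc 0 1)).withDensity (fun q => ENNReal.ofReal (g q))).map (fun q => q*(1-q))

lemma nu_fin (μ : Measure ℝ) [IsFiniteMeasure μ] (g : ℝ → ℝ)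
    (hg : ∀ q ∈ Set.Icc (0:ℝ) 1, g q ≤ 1) : IsFiniteMeasure (nu μ g) := by
  haveI := aux_fin μ g hg
  constructor
  unfold nu
  rw [Measure.map_apply (by fun_prop) MeasurableSet.univ]
  simp only [Set.preimage_univ]
  exact measure_lt_top _ _

lemma integral_nu (μ : Measure ℝ) [IsFiniteMeasure μ] (g : ℝ → ℝ) (hg : Continuous g)
    (h : ℝ → ℝ) (hh : Continuous h) :
    ∫ x, h x ∂(nu μ g) = ∫ q in Set.Icc (0:ℝ) 1, (max (g q) 0) * h (q*(1-q)) ∂μ := by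
  unfold nu
  rw [integral_map (by fun_prop) hh.aestronglyMeasurable]
  rw [show (fun q => ENNReal.ofReal (g q)) = (fun q => (((g q).toNNReal : ℝ≥0) : ℝ≥0∞)) from rfl]
  rw [integral_withDensity_eq_integral_smul
    (f := fun q => (g q).toNNReal) (by fun_prop : Measurable fun q => (g q).toNNReal)]
  refine integral_congr_ae (Filter.Eventually.of_forall fun q => ?_)
  simp [NNReal.smul_def, Real.coe_toNNReal']

lemma integrable_nu (μ : Measure ℝ) [IsFiniteMeasure μ] (g : ℝ → ℝ) (hg : Continuous g)
    (h : ℝ → ℝ) (hh : Continuous h) : Integrable h (nu μ g) := by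
  unfold nu
  rw [integrable_map_measure hh.aestronglyMeasurable (by fun_prop)]
  rw [show (fun q => ENNReal.ofReal (g q)) = (fun q => (((g q).toNNReal : ℝ≥0) : ℝ≥0∞)) from rfl]
  rw [integrable_withDensity_iff_integrable_smul
    (f := fun q => (g q).toNNReal) (by fun_prop : Measurable fun q => (g q).toNNReal)]
  have hc : Continuous fun q : ℝ => (g q).toNNReal • ((h ∘ fun q => q*(1-q)) q) := by
    have : (fun q : ℝ => (g q).toNNReal • ((h ∘ fun q => q*(1-q)) q))
        = fun q : ℝ => (max (g q) 0) * h (q*(1-q)) := by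
      funext q
      simp [NNReal.smul_def, Real.coe_toNNReal']
    rw [this]
    exact ((hg.max continuous_const).mul (hh.comp (by continuity)))
  exact hc.continuousOn.integrableOn_compact isCompact_Icc

lemma nu_compl (μ : Measure ℝ) [IsFiniteMeasure μ] (g : ℝ → ℝ) :
    nu μ g (Set.Icc (0:ℝ) (1/4))ᶜ = 0 := by
  unfold nu
  rw [Measure.map_apply (by fun_prop) measurableSet_Icc.compl]
  rw [withDensity_apply _ ((measurableSet_Icc.compl).preimage (by fun_prop))]
  rw [Measure.restrict_restrict (((measurableSet_Icc (a := (0:ℝ)) (b := (1/4:ℝ))).compl).preimage (by fun_prop))]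
  have hempty : (fun q:ℝ => q*(1-q)) ⁻¹' (Set.Icc (0:ℝ) (1/4))ᶜ ∩ Set.Icc 0 1 = ∅ := by
    ext q
    simp only [Set.mem_inter_iff, Set.mem_preimage, Set.mem_compl_iff, Set.mem_Icc,
      Set.mem_empty_iff_false, iff_false]
    rintro ⟨hq, hq0, hq1⟩
    exact hq ⟨by nlinarith, by nlinarith [sq_nonneg (q - 1/2)]⟩
  rw [hempty]
  simp

lemma diff_repr (μ : Measure ℝ) [IsProbabilityMeasure μ] (h : ℝ → ℝ) (hh : Continuous h) :
    ∫ x, h x ∂(nu μ (fun q => 2*q-1)) - ∫ x, h x ∂(nu μ (fun q => 1-2*q))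
      = ∫ q in Set.Icc (0:ℝ) 1, (2*q-1) * h (q*(1-q)) ∂μ := by
  rw [integral_nu μ _ (by continuity) h hh, integral_nu μ _ (by continuity) h hh]
  have i1 : IntegrableOn (fun q : ℝ => max (2*q-1) 0 * h (q*(1-q))) (Set.Icc 0 1) μ := by
    have hc : Continuous fun q:ℝ => max (2*q-1) 0 * h (q*(1-q)) :=
      ((by continuity : Continuous fun q:ℝ => max (2*q-1) 0).mul (hh.comp (by continuity)))
    exact hc.continuousOn.integrableOn_compact isCompact_Icc
  have i2 : IntegrableOn (fun q : ℝ => max (1-2*q) 0 * h (q*(1-q))) (Set.Icc 0 1) μ := by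
    have hc : Continuous fun q:ℝ => max (1-2*q) 0 * h (q*(1-q)) :=
      ((by continuity : Continuous fun q:ℝ => max (1-2*q) 0).mul (hh.comp (by continuity)))
    exact hc.continuousOn.integrableOn_compact isCompact_Icc
  rw [← integral_sub i1 i2]
  refine integral_congr_ae (Filter.Eventually.of_forall fun q => ?_)
  show (max (2*q-1) 0) * h (q*(1-q)) - (max (1-2*q) 0) * h (q*(1-q)) = (2*q-1) * h (q*(1-q))
  rcases le_total (2*q-1) 0 with hq | hq
  · rw [max_eq_right hq, max_eq_left (by linarith : (0:ℝ) ≤ 1-2*q)]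
    ring
  · rw [max_eq_left hq, max_eq_right (by linarith : 1-2*q ≤ (0:ℝ))]
    ring

lemma voteV_repr (μ : Measure ℝ) [IsProbabilityMeasure μ] (hμ : μ (Set.Icc (0:ℝ) 1)ᶜ = 0) (n : ℕ) :
    voteV μ n = 1/2 + ∫ q in Set.Icc (0:ℝ) 1, (2*q-1) * Hn n (q*(1-q)) ∂μ := by
  have hres : μ.restrict (Set.Icc 0 1) = μ := by
    apply Measure.restrict_eq_self_of_ae_mem
    rw [MeasureTheory.ae_iff]
    exact hμ
  have hIcc : μ (Set.Icc (0:ℝ) 1) = 1 := by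
    have := measure_add_measure_compl (μ := μ) (measurableSet_Icc (a := (0:ℝ)) (b := 1))
    rw [hμ, add_zero] at this
    rw [this, measure_univ]
  unfold voteV
  rw [show (∫ q, majP n q ∂μ) = ∫ q in Set.Icc (0:ℝ) 1, majP n q ∂μ from by rw [hres]]
  have hmaj : ∀ q : ℝ, majP n q = 1/2 + (2*q-1) * Hn n (q*(1-q)) := majP_eq n
  rw [show (fun q => majP n q) = fun q => 1/2 + (2*q-1) * Hn n (q*(1-q)) from funext hmaj]
  have iX : IntegrableOn (fun q : ℝ => (2*q-1) * Hn n (q*(1-q))) (Set.Icc 0 1) μ := by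
    refine Continuous.continuousOn ?_ |>.integrableOn_compact isCompact_Icc
    have : Continuous (Hn n) := by
      unfold Hn
      continuity
    exact ((by continuity : Continuous fun q:ℝ => 2*q-1).mul (this.comp (by continuity)))
  rw [integral_add (integrableOn_const (μ := μ) (s := Set.Icc (0:ℝ) 1) (C := (1/2:ℝ)) (by rw [hIcc]; exact ENNReal.one_ne_top)) iX]
  congr 1
  rw [setIntegral_const]
  rw [measureReal_def, hIcc]
  simp

instance nu_fin_p (μ : Measure ℝ) [IsFiniteMeasure μ] : IsFiniteMeasure (nu μ (fun q => 2*q-1)) :=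
  nu_fin μ _ (fun q hq => by simp only [Set.mem_Icc] at hq; linarith [hq.2])

instance nu_fin_m (μ : Measure ℝ) [IsFiniteMeasure μ] : IsFiniteMeasure (nu μ (fun q => 1-2*q)) :=
  nu_fin μ _ (fun q hq => by simp only [Set.mem_Icc] at hq; linarith [hq.1])

lemma signature_eq' (μ : Measure ℝ) [IsFiniteMeasure μ] :
    signature μ = (nu μ (fun q => 2*q-1)).toSignedMeasure
      - (nu μ (fun q => 1-2*q)).toSignedMeasure := rfl

lemma Hn_cont (n : ℕ) : Continuous (Hn n) := by
  unfold Hn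
  apply continuous_finset_sum
  intro k _
  continuity

lemma integral_Hn (ν : Measure ℝ) (hint : ∀ k : ℕ, Integrable (fun x : ℝ => x^k) ν) (n : ℕ) :
    ∫ x, Hn n x ∂ν = ∑ k ∈ Finset.range (n+1), Hc n k * ∫ x, x^k ∂ν := by
  unfold Hn
  rw [integral_finset_sum _ (fun k _ => (hint k).const_mul (Hc n k))]
  exact Finset.sum_congr rfl fun k _ => integral_const_mul _ _


lemma moments_eq (m₁ m₂ : Measure ℝ)
    (int₁ : ∀ h : ℝ → ℝ, Continuous h → Integrable h m₁)
    (int₂ : ∀ h : ℝ → ℝ, Continuous h → Integrable h m₂)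
    (hH : ∀ n : ℕ, ∫ x, Hn n x ∂m₁ = ∫ x, Hn n x ∂m₂) :
    ∀ k : ℕ, ∫ x, x^k ∂m₁ = ∫ x, x^k ∂m₂ := by
  intro k
  induction k using Nat.strong_induction_on with
  | _ k ih =>
    have hVk := hH k
    rw [integral_Hn m₁ (fun j => int₁ _ (continuous_pow j)) k,
      integral_Hn m₂ (fun j => int₂ _ (continuous_pow j)) k,
      Finset.sum_range_succ, Finset.sum_range_succ] at hVk
    have hsame : ∑ j ∈ Finset.range k, Hc k j * ∫ x, x^j ∂m₁
        = ∑ j ∈ Finset.range k, Hc k j * ∫ x, x^j ∂m₂ :=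
      Finset.sum_congr rfl fun j hj => by rw [ih j (Finset.mem_range.mp hj)]
    have : Hc k k * ∫ x, x^k ∂m₁ = Hc k k * ∫ x, x^k ∂m₂ := by linarith
    exact mul_left_cancel₀ (ne_of_gt (Hc_pos k)) this

lemma poly_eq (m₁ m₂ : Measure ℝ)
    (int₁ : ∀ h : ℝ → ℝ, Continuous h → Integrable h m₁)
    (int₂ : ∀ h : ℝ → ℝ, Continuous h → Integrable h m₂)
    (hmono : ∀ k : ℕ, ∫ x, x^k ∂m₁ = ∫ x, x^k ∂m₂) (p : Polynomial ℝ) :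
    ∫ x, p.eval x ∂m₁ = ∫ x, p.eval x ∂m₂ := by
  have he : ∀ x : ℝ, p.eval x = ∑ i ∈ Finset.range (p.natDegree+1), p.coeff i * x^i :=
    fun x => Polynomial.eval_eq_sum_range x
  rw [show (fun x : ℝ => p.eval x)
      = fun x : ℝ => ∑ i ∈ Finset.range (p.natDegree+1), p.coeff i * x^i from funext he]
  rw [integral_finset_sum _ (fun i _ => (int₁ _ (continuous_pow i)).const_mul _),
    integral_finset_sum _ (fun i _ => (int₂ _ (continuous_pow i)).const_mul _)]
  refine Finset.sum_congr rfl fun i _ => ?_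
  rw [integral_const_mul, integral_const_mul, hmono i]

lemma near_poly_bound (m : Measure ℝ) [IsFiniteMeasure m]
    (hres : m.restrict (Set.Icc (0:ℝ) (1/4)) = m)
    (f : ℝ →ᵇ ℝ) (p : Polynomial ℝ) (hip : Integrable (fun x => p.eval x) m)
    (δ : ℝ) (hδ0 : 0 < δ) (hp : ∀ x ∈ Set.Icc (0:ℝ) (1/4), |p.eval x - f x| < δ) :
    ‖(∫ x, f x ∂m) - ∫ x, p.eval x ∂m‖ ≤ δ * (m Set.univ).toReal := by
  rw [← integral_sub (f.integrable m) hip]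
  rw [show (∫ x, (f x - p.eval x) ∂m) = ∫ x in Set.Icc (0:ℝ) (1/4), (f x - p.eval x) ∂m
    from by rw [hres]]
  calc ‖∫ x in Set.Icc (0:ℝ) (1/4), (f x - p.eval x) ∂m‖
      ≤ δ * (m (Set.Icc (0:ℝ) (1/4))).toReal := by
        apply norm_setIntegral_le_of_norm_le_const (measure_lt_top m _)
          (fun x hx => by rw [Real.norm_eq_abs, abs_sub_comm]; exact (hp x hx).le)
    _ ≤ δ * (m Set.univ).toReal := by
        apply mul_le_mul_of_nonneg_left _ hδ0.le
        exact (ENNReal.toReal_le_toReal (measure_ne_top m _)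
          (measure_ne_top m _)).mpr (measure_mono (Set.subset_univ _))

lemma bc_eq (m₁ m₂ : Measure ℝ) [IsFiniteMeasure m₁] [IsFiniteMeasure m₂]
    (int₁ : ∀ h : ℝ → ℝ, Continuous h → Integrable h m₁)
    (int₂ : ∀ h : ℝ → ℝ, Continuous h → Integrable h m₂)
    (hres₁ : m₁.restrict (Set.Icc (0:ℝ) (1/4)) = m₁)
    (hres₂ : m₂.restrict (Set.Icc (0:ℝ) (1/4)) = m₂)
    (hpoly : ∀ p : Polynomial ℝ, ∫ x, p.eval x ∂m₁ = ∫ x, p.eval x ∂m₂)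
    (f : ℝ →ᵇ ℝ) : ∫ x, f x ∂m₁ = ∫ x, f x ∂m₂ := by
  have habs : ∀ ε : ℝ, 0 < ε → |(∫ x, f x ∂m₁) - ∫ x, f x ∂m₂| ≤ ε := by
    intro ε hε
    set C₁ : ℝ := (m₁ Set.univ).toReal with hC₁
    set C₂ : ℝ := (m₂ Set.univ).toReal with hC₂
    have hC₁0 : 0 ≤ C₁ := ENNReal.toReal_nonneg
    have hC₂0 : 0 ≤ C₂ := ENNReal.toReal_nonneg
    set δ : ℝ := ε / (C₁ + C₂ + 1) with hδ
    have hδ0 : 0 < δ := by positivity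
    obtain ⟨p, hp⟩ := exists_polynomial_near_of_continuousOn 0 (1/4) f
      f.continuous.continuousOn δ hδ0
    have b₁ := near_poly_bound m₁ hres₁ f p (int₁ _ p.continuous_aeval) δ hδ0 hp
    have b₂ := near_poly_bound m₂ hres₂ f p (int₂ _ p.continuous_aeval) δ hδ0 hp
    have hpp := hpoly p
    have hkey : |(∫ x, f x ∂m₁) - ∫ x, f x ∂m₂| ≤ δ * C₁ + δ * C₂ := by
      rw [show (∫ x, f x ∂m₁) - ∫ x, f x ∂m₂
          = ((∫ x, f x ∂m₁) - ∫ x, p.eval x ∂m₁)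
            - ((∫ x, f x ∂m₂) - ∫ x, p.eval x ∂m₂) from by rw [hpp]; ring]
      calc _ ≤ |(∫ x, f x ∂m₁) - ∫ x, p.eval x ∂m₁|
            + |(∫ x, f x ∂m₂) - ∫ x, p.eval x ∂m₂| := abs_sub _ _
        _ ≤ δ * C₁ + δ * C₂ := by
            rw [← Real.norm_eq_abs, ← Real.norm_eq_abs]
            exact add_le_add b₁ b₂
    refine hkey.trans ?_
    rw [hδ, div_mul_eq_mul_div, div_mul_eq_mul_div, ← add_div, div_le_iff₀ (by positivity)]
    nlinarith
  have h0 : |(∫ x, f x ∂m₁) - ∫ x, f x ∂m₂| ≤ 0 :=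
    le_of_forall_pos_le_add (fun ε hε => by simpa using habs ε hε)
  have := abs_nonpos_iff.mp h0
  linarith [sub_eq_zero.mp this]

lemma measure_eq_of_bc (m₁ m₂ : Measure ℝ) [IsFiniteMeasure m₁] [IsFiniteMeasure m₂]
    (hbc : ∀ f : ℝ →ᵇ ℝ, ∫ x, f x ∂m₁ = ∫ x, f x ∂m₂) : m₁ = m₂ := by
  apply ext_of_forall_lintegral_eq_of_IsFiniteMeasure
  intro f
  have lip : LipschitzWith 1 (fun x : ℝ≥0 => (x : ℝ)) := isometry_subtype_coe.lipschitz
  set fr : ℝ →ᵇ ℝ := BoundedContinuousFunction.comp _ lip f with hfr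
  have e₁ : ∫⁻ x, f x ∂m₁ = ENNReal.ofReal (∫ x, fr x ∂m₁) :=
    lintegral_coe_eq_integral _ (fr.integrable m₁)
  have e₂ : ∫⁻ x, f x ∂m₂ = ENNReal.ofReal (∫ x, fr x ∂m₂) :=
    lintegral_coe_eq_integral _ (fr.integrable m₂)
  rw [e₁, e₂, hbc fr]

set_option maxHeartbeats 1000000 in
/-- Two probability laws on `[0,1]` have the same odd-budget majority voting curve
iff their signed voting signatures coincide. -/
theorem stmt5 (μ₁ μ₂ : Measure ℝ) [IsProbabilityMeasure μ₁] [IsProbabilityMeasure μ₂]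
    (h₁ : μ₁ (Set.Icc (0:ℝ) 1)ᶜ = 0) (h₂ : μ₂ (Set.Icc (0:ℝ) 1)ᶜ = 0) :
    (∀ n : ℕ, voteV μ₁ n = voteV μ₂ n) ↔ signature μ₁ = signature μ₂ := by
  have cgp : Continuous (fun q : ℝ => 2*q-1) := by continuity
  have cgm : Continuous (fun q : ℝ => 1-2*q) := by continuity
  have bridge : ∀ (μ : Measure ℝ) [IsProbabilityMeasure μ], μ (Set.Icc (0:ℝ) 1)ᶜ = 0 → ∀ n : ℕ,
      voteV μ n = 1/2 + (∫ x, Hn n x ∂(nu μ (fun q => 2*q-1))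
        - ∫ x, Hn n x ∂(nu μ (fun q => 1-2*q))) := by
    intro μ _ hμ n
    rw [voteV_repr μ hμ n, diff_repr μ (Hn n) (Hn_cont n)]
  have int₁ : ∀ h : ℝ → ℝ, Continuous h →
      Integrable h (nu μ₁ (fun q => 2*q-1) + nu μ₂ (fun q => 1-2*q)) := fun h hh =>
    (integrable_nu μ₁ _ cgp h hh).add_measure (integrable_nu μ₂ _ cgm h hh)
  have int₂ : ∀ h : ℝ → ℝ, Continuous h →
      Integrable h (nu μ₂ (fun q => 2*q-1) + nu μ₁ (fun q => 1-2*q)) := fun h hh =>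
    (integrable_nu μ₂ _ cgp h hh).add_measure (integrable_nu μ₁ _ cgm h hh)
  have key : (∀ n : ℕ, voteV μ₁ n = voteV μ₂ n) ↔
      (∀ n : ℕ, ∫ x, Hn n x ∂(nu μ₁ (fun q => 2*q-1) + nu μ₂ (fun q => 1-2*q))
        = ∫ x, Hn n x ∂(nu μ₂ (fun q => 2*q-1) + nu μ₁ (fun q => 1-2*q))) := by
    constructor <;> intro hV n <;> have hVn := hV n
    · rw [bridge μ₁ h₁ n, bridge μ₂ h₂ n] at hVn
      rw [integral_add_measure (integrable_nu _ _ cgp _ (Hn_cont n))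
          (integrable_nu _ _ cgm _ (Hn_cont n)),
        integral_add_measure (integrable_nu _ _ cgp _ (Hn_cont n))
          (integrable_nu _ _ cgm _ (Hn_cont n))]
      linarith
    · rw [bridge μ₁ h₁ n, bridge μ₂ h₂ n]
      rw [integral_add_measure (integrable_nu _ _ cgp _ (Hn_cont n))
          (integrable_nu _ _ cgm _ (Hn_cont n)),
        integral_add_measure (integrable_nu _ _ cgp _ (Hn_cont n))
          (integrable_nu _ _ cgm _ (Hn_cont n))] at hVn
      linarith
  have sig_iff : (signature μ₁ = signature μ₂) ↔
      (nu μ₁ (fun q => 2*q-1) + nu μ₂ (fun q => 1-2*q)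
        = nu μ₂ (fun q => 2*q-1) + nu μ₁ (fun q => 1-2*q)) := by
    rw [signature_eq' μ₁, signature_eq' μ₂, sub_eq_sub_iff_add_eq_add,
      ← Measure.toSignedMeasure_add, ← Measure.toSignedMeasure_add,
      Measure.toSignedMeasure_eq_toSignedMeasure_iff]
  rw [key, sig_iff]
  constructor
  · intro hV
    have hs₁ : (nu μ₁ (fun q => 2*q-1) + nu μ₂ (fun q => 1-2*q))
        (Set.Icc (0:ℝ) (1/4))ᶜ = 0 := by
      rw [Measure.add_apply, nu_compl, nu_compl]; simp
    have hs₂ : (nu μ₂ (fun q => 2*q-1) + nu μ₁ (fun q => 1-2*q))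
        (Set.Icc (0:ℝ) (1/4))ᶜ = 0 := by
      rw [Measure.add_apply, nu_compl, nu_compl]; simp
    exact measure_eq_of_bc _ _
      (bc_eq _ _ int₁ int₂
        (Measure.restrict_eq_self_of_ae_mem (by rw [MeasureTheory.ae_iff]; exact hs₁))
        (Measure.restrict_eq_self_of_ae_mem (by rw [MeasureTheory.ae_iff]; exact hs₂))
        (poly_eq _ _ int₁ int₂ (moments_eq _ _ int₁ int₂ hV)))
  · intro hm n
    rw [hm]
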